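/- Fix k ≥ 2, positive integers ρk, ρ̄k with ρ+ρ̄=1, Δ > 0, R ∈ ℕ, R ≥ 1. Let Ẑ = V Λ U_⊗ᵀ be the SVD of the (δ,R)-SEL matrix (with factors as in the SVD lemma). Then the matrix B* = U_⊗ Vᵀ satisfies the element-wise strict inequality B* ⊙ Ẑᵀ > 0, i.e., every entry of B* has the same (strict) sign as the corresponding entry of Ẑᵀ. -/

import Mathlib

private lemma sel_aux_key1 (k R ρ ρbar Δ : ℝ) (hk : 0 < k) (hR : 0 < R)
    (hρ : 0 < ρ) (hρbar : 0 < ρbar) (hΔ : 0 < Δ) :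
    Δ ^ 2 * ρ ^ 2 * k ^ 2 * R < k * (ρbar + R * ρ) * (k * (ρbar + ρ * Δ ^ 2)) := by
  nlinarith [mul_pos (mul_pos hk hk) (mul_pos hρbar hρbar),
    mul_pos (mul_pos hk hk) (mul_pos (mul_pos hρbar hρ) (mul_pos hΔ hΔ)),
    mul_pos (mul_pos (mul_pos hk hk) hR) (mul_pos hρ hρbar)]

private lemma sel_aux_key2 (k R ρ ρbar Δ : ℝ) (hk : 0 < k) (hR : 0 < R)
    (hρ : 0 < ρ) (hρbar : 0 < ρbar) (hΔ : 0 < Δ) :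
    (ρbar * k) ^ 2 < k * (ρbar + R * ρ) * (k * (ρbar + ρ * Δ ^ 2)) := by
  nlinarith [mul_pos (mul_pos hk hk) (mul_pos (mul_pos hρbar hρ) (mul_pos hΔ hΔ)),
    mul_pos (mul_pos (mul_pos hk hk) hR) (mul_pos hρ hρbar),
    mul_pos (mul_pos (mul_pos (mul_pos hk hk) hR) (mul_pos hρ hρ)) (mul_pos hΔ hΔ)]



set_option maxHeartbeats 2000000 in
/-- With Ẑ = V Λ U_⊗ᵀ the SVD of the (δ,R)-SEL matrix, the
matrix B* = U_⊗ Vᵀ satisfies the element-wise strict inequality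
B* ⊙ Ẑᵀ > 0: every entry of B* has the same strict sign as the corresponding
entry of Ẑᵀ. -/
theorem sel_hadamard_sign
    (a b k R : ℕ) (ha : 1 ≤ a) (hb : 1 ≤ b) (hk : k = a + b) (hk2 : 2 ≤ k)
    (hR : 1 ≤ R)
    (ρ ρbar Δ : ℝ) (hρ : 0 < ρ) (hρbar : 0 < ρbar) (hsum : ρ + ρbar = 1)
    (hΔ : 0 < Δ) (hak : (a : ℝ) = ρbar * k) (hbk : (b : ℝ) = ρ * k)
    (P1 : Matrix (Fin a) (Fin (a - 1)) ℝ) (P2 : Matrix (Fin b) (Fin (b - 1)) ℝ)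
    (hP1o : P1.transpose * P1 = 1)
    (hP1one : P1.transpose.mulVec (fun _ => (1 : ℝ)) = 0)
    (hP1proj : P1 * P1.transpose =
      (1 : Matrix (Fin a) (Fin a) ℝ) - ((a : ℝ))⁻¹ • Matrix.of (fun _ _ => (1 : ℝ)))
    (hP2o : P2.transpose * P2 = 1)
    (hP2one : P2.transpose.mulVec (fun _ => (1 : ℝ)) = 0)
    (hP2proj : P2 * P2.transpose =
      (1 : Matrix (Fin b) (Fin b) ℝ) - ((b : ℝ))⁻¹ • Matrix.of (fun _ _ => (1 : ℝ)))
    (V : Matrix (Fin a ⊕ Fin b) ((Fin (a - 1) ⊕ Unit) ⊕ Fin (b - 1)) ℝ)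
    (hV : V = Matrix.of fun r c =>
      match r, c with
      | Sum.inl i, Sum.inl (Sum.inl j) => P1 i j
      | Sum.inl _, Sum.inl (Sum.inr _) =>
          -Δ * Real.sqrt (ρ / ρbar) / Real.sqrt (k * (ρbar + ρ * Δ ^ 2))
      | Sum.inl _, Sum.inr _ => 0
      | Sum.inr _, Sum.inl (Sum.inl _) => 0
      | Sum.inr _, Sum.inl (Sum.inr _) =>
          Real.sqrt (ρbar / ρ) / Real.sqrt (k * (ρbar + ρ * Δ ^ 2))
      | Sum.inr i, Sum.inr j => P2 i j)
    (Λ : Matrix ((Fin (a - 1) ⊕ Unit) ⊕ Fin (b - 1))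
        ((Fin (a - 1) ⊕ Unit) ⊕ Fin (b - 1)) ℝ)
    (hΛ : Λ = Matrix.diagonal fun c =>
      match c with
      | Sum.inl (Sum.inl _) => Real.sqrt R / Δ
      | Sum.inl (Sum.inr _) => Real.sqrt ((ρbar + R * ρ) / (ρbar + ρ * Δ ^ 2))
      | Sum.inr _ => 1)
    (U : Matrix ((Fin a × Fin R) ⊕ Fin b) ((Fin (a - 1) ⊕ Unit) ⊕ Fin (b - 1)) ℝ)
    (hU : U = Matrix.of fun r c =>
      match r, c with
      | Sum.inl (i, _), Sum.inl (Sum.inl j) => P1 i j / Real.sqrt R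
      | Sum.inl _, Sum.inl (Sum.inr _) =>
          -Real.sqrt (ρ / ρbar) / Real.sqrt (k * (ρbar + R * ρ))
      | Sum.inl _, Sum.inr _ => 0
      | Sum.inr _, Sum.inl (Sum.inl _) => 0
      | Sum.inr _, Sum.inl (Sum.inr _) =>
          Real.sqrt (ρbar / ρ) / Real.sqrt (k * (ρbar + R * ρ))
      | Sum.inr i, Sum.inr j => P2 i j)
    (Z : Matrix (Fin a ⊕ Fin b) ((Fin a × Fin R) ⊕ Fin b) ℝ)
    (hZ : Z = Matrix.of fun r c =>
      match r, c with
      | Sum.inl i, Sum.inl (i', _) =>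
          Δ⁻¹ * ((if i = i' then 1 else 0) - 1 / (k * (ρbar + ρ * Δ ^ 2)))
      | Sum.inl _, Sum.inr _ => -Δ / (k * (ρbar + ρ * Δ ^ 2))
      | Sum.inr _, Sum.inl _ => -1 / (k * (ρbar + ρ * Δ ^ 2))
      | Sum.inr i, Sum.inr i' =>
          (if i = i' then 1 else 0) - Δ ^ 2 / (k * (ρbar + ρ * Δ ^ 2)))
    (hSVD : V * Λ * U.transpose = Z) :
    ∀ (p : (Fin a × Fin R) ⊕ Fin b) (q : Fin a ⊕ Fin b),
      0 < (U * V.transpose) p q * Z.transpose p q := by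
  intro p q
  have hk2' : (2:ℝ) ≤ k := by exact_mod_cast hk2
  have hkR : (0:ℝ) < k := by linarith
  have hRpos : (0:ℝ) < R := by exact_mod_cast hR
  have haR : (1:ℝ) ≤ ρbar * k := by rw [← hak]; exact_mod_cast ha
  have hbR : (1:ℝ) ≤ ρ * k := by rw [← hbk]; exact_mod_cast hb
  have hc2 : (0:ℝ) < k * (ρbar + ρ * Δ ^ 2) := by positivity
  have hc1 : (0:ℝ) < k * (ρbar + R * ρ) := by positivity
  set s1 := Real.sqrt (k * (ρbar + R * ρ)) with hs1
  set s2 := Real.sqrt (k * (ρbar + ρ * Δ ^ 2)) with hs2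
  set sR := Real.sqrt R with hsRdef
  have hs1p : 0 < s1 := Real.sqrt_pos.2 hc1
  have hs2p : 0 < s2 := Real.sqrt_pos.2 hc2
  have hsRp : 0 < sR := Real.sqrt_pos.2 hRpos
  have hsqR : sR ^ 2 = R := Real.sq_sqrt hRpos.le
  have hmm : Real.sqrt (ρ / ρbar) * Real.sqrt (ρ / ρbar) = ρ / ρbar :=
    Real.mul_self_sqrt (by positivity)
  have hmm2 : Real.sqrt (ρbar / ρ) * Real.sqrt (ρbar / ρ) = ρbar / ρ :=
    Real.mul_self_sqrt (by positivity)
  have hcross : Real.sqrt (ρ / ρbar) * Real.sqrt (ρbar / ρ) = 1 := by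
    rw [← Real.sqrt_mul (by positivity), show ρ / ρbar * (ρbar / ρ) = 1 by field_simp]
    exact Real.sqrt_one
  have hcross2 : Real.sqrt (ρbar / ρ) * Real.sqrt (ρ / ρbar) = 1 := by
    rw [mul_comm]; exact hcross
  have hP1e : ∀ i i' : Fin a, (∑ j, P1 i j * P1 i' j)
      = (if i = i' then 1 else 0) - (ρbar * k)⁻¹ := by
    intro i i'
    have h := congrFun (congrFun hP1proj i) i'
    simpa [Matrix.mul_apply, Matrix.sub_apply, Matrix.one_apply, hak] using h
  have hP2e : ∀ i i' : Fin b, (∑ j, P2 i j * P2 i' j)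
      = (if i = i' then 1 else 0) - (ρ * k)⁻¹ := by
    intro i i'
    have h := congrFun (congrFun hP2proj i) i'
    simpa [Matrix.mul_apply, Matrix.sub_apply, Matrix.one_apply, hbk] using h
  have key1 : Δ * ρ * (k * sR) < s1 * s2 := by
    rw [hs1, hs2, ← Real.sqrt_mul hc1.le]
    refine (Real.lt_sqrt (by positivity)).2 ?_
    have h2 : (Δ * ρ * (↑k * sR)) ^ 2 = Δ ^ 2 * ρ ^ 2 * (k:ℝ) ^ 2 * R := by
      rw [mul_pow, mul_pow, mul_pow, hsqR]; ring
    rw [h2]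
    exact sel_aux_key1 k R ρ ρbar Δ hkR hRpos hρ hρbar hΔ
  have key2 : ρbar * k < s1 * s2 := by
    rw [hs1, hs2, ← Real.sqrt_mul hc1.le]
    refine (Real.lt_sqrt (by positivity)).2 ?_
    exact sel_aux_key2 k R ρ ρbar Δ hkR hRpos hρ hρbar hΔ
  have hc2gt1 : 1 / (k * (ρbar + ρ * Δ ^ 2)) < 1 := by
    rw [div_lt_one hc2]
    nlinarith [mul_pos (mul_pos hkR hρ) (mul_pos hΔ hΔ)]
  have hc2gtΔ : Δ ^ 2 / (k * (ρbar + ρ * Δ ^ 2)) < 1 := by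
    rw [div_lt_one hc2]
    nlinarith [mul_pos hkR hρbar, sq_nonneg Δ]
  have hc2inv : 0 < 1 / (k * (ρbar + ρ * Δ ^ 2)) := by positivity
  obtain ⟨i, r⟩ | i := p <;> obtain i' | i' := q
  · -- p = inl (i,r), q = inl i'
    have e1 : (U * V.transpose) (Sum.inl (i, r)) (Sum.inl i')
        = ((if i = i' then 1 else 0) - (ρbar * k)⁻¹) / sR + Δ * (ρ / ρbar) / (s1 * s2) := by
      rw [hU, hV]
      simp only [Matrix.mul_apply, Matrix.transpose_apply, Matrix.of_apply,
        Fintype.sum_sum_type, Finset.univ_unique, Finset.sum_singleton,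
        zero_mul, mul_zero, Finset.sum_const_zero, add_zero]
      have h1 : ∑ x : Fin (a - 1), P1 i x / sR * P1 i' x
          = (∑ j, P1 i j * P1 i' j) / sR := by
        rw [Finset.sum_div]; exact Finset.sum_congr rfl fun j _ => by ring
      rw [h1, hP1e i i']
      have h2 : -Real.sqrt (ρ / ρbar) / s1 * (-Δ * Real.sqrt (ρ / ρbar) / s2)
          = Δ * (ρ / ρbar) / (s1 * s2) := by
        rw [div_mul_div_comm]
        congr 1
        linear_combination Δ * hmm
      rw [h2]
    have eZ : Z.transpose (Sum.inl (i, r)) (Sum.inl i')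
        = Δ⁻¹ * ((if i' = i then 1 else 0) - 1 / (k * (ρbar + ρ * Δ ^ 2))) := by
      rw [hZ]; rfl
    rw [e1, eZ]
    by_cases h : i = i'
    · subst h
      simp only [eq_self_iff_true, if_true]
      apply mul_pos
      · have hinv : (ρbar * (k:ℝ))⁻¹ ≤ 1 := inv_le_one_of_one_le₀ haR
        have ht1 : 0 ≤ (1 - (ρbar * (k:ℝ))⁻¹) / sR := by
          apply div_nonneg (by linarith) hsRp.le
        have ht2 : 0 < Δ * (ρ / ρbar) / (s1 * s2) :=
          div_pos (by positivity) (mul_pos hs1p hs2p)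
        linarith
      · apply mul_pos (inv_pos.2 hΔ)
        linarith
    · rw [if_neg h, if_neg fun e => h e.symm]
      apply mul_pos_of_neg_of_neg
      · have hlt : Δ * (ρ / ρbar) / (s1 * s2) < (ρbar * k)⁻¹ / sR := by
          rw [div_lt_div_iff₀ (mul_pos hs1p hs2p) hsRp, inv_mul_eq_div,
            lt_div_iff₀ (by positivity : (0:ℝ) < ρbar * k)]
          calc Δ * (ρ / ρbar) * sR * (ρbar * k) = Δ * ρ * (k * sR) := by
                field_simp
            _ < s1 * s2 := key1
        have e : (0 - (ρbar * (k:ℝ))⁻¹) / sR = -((ρbar * (k:ℝ))⁻¹ / sR) := by ring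
        rw [e]; linarith
      · apply mul_neg_of_pos_of_neg (inv_pos.2 hΔ)
        linarith
  · -- p = inl (i,r), q = inr i'
    have e2 : (U * V.transpose) (Sum.inl (i, r)) (Sum.inr i') = -(1 / (s1 * s2)) := by
      rw [hU, hV]
      simp only [Matrix.mul_apply, Matrix.transpose_apply, Matrix.of_apply,
        Fintype.sum_sum_type, Finset.univ_unique, Finset.sum_singleton,
        zero_mul, mul_zero, Finset.sum_const_zero, add_zero, zero_add]
      rw [div_mul_div_comm]
      rw [show -Real.sqrt (ρ / ρbar) * Real.sqrt (ρbar / ρ) = -1 by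
        linear_combination -hcross]
      ring
    have eZ : Z.transpose (Sum.inl (i, r)) (Sum.inr i')
        = -1 / (k * (ρbar + ρ * Δ ^ 2)) := by rw [hZ]; rfl
    rw [e2, eZ]
    apply mul_pos_of_neg_of_neg
    · have : 0 < 1 / (s1 * s2) := div_pos one_pos (mul_pos hs1p hs2p)
      linarith
    · exact div_neg_of_neg_of_pos (by norm_num) hc2
  · -- p = inr i, q = inl i'
    have e3 : (U * V.transpose) (Sum.inr i) (Sum.inl i') = -(Δ / (s1 * s2)) := by
      rw [hU, hV]
      simp only [Matrix.mul_apply, Matrix.transpose_apply, Matrix.of_apply,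
        Fintype.sum_sum_type, Finset.univ_unique, Finset.sum_singleton,
        zero_mul, mul_zero, Finset.sum_const_zero, add_zero, zero_add]
      rw [div_mul_div_comm]
      rw [show Real.sqrt (ρbar / ρ) * (-Δ * Real.sqrt (ρ / ρbar)) = -Δ by
        linear_combination -Δ * hcross2]
      ring
    have eZ : Z.transpose (Sum.inr i) (Sum.inl i')
        = -Δ / (k * (ρbar + ρ * Δ ^ 2)) := by rw [hZ]; rfl
    rw [e3, eZ]
    apply mul_pos_of_neg_of_neg
    · have : 0 < Δ / (s1 * s2) := div_pos hΔ (mul_pos hs1p hs2p)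
      linarith
    · exact div_neg_of_neg_of_pos (by linarith) hc2
  · -- p = inr i, q = inr i'
    have e4 : (U * V.transpose) (Sum.inr i) (Sum.inr i')
        = ρbar / ρ / (s1 * s2) + ((if i = i' then 1 else 0) - (ρ * k)⁻¹) := by
      rw [hU, hV]
      simp only [Matrix.mul_apply, Matrix.transpose_apply, Matrix.of_apply,
        Fintype.sum_sum_type, Finset.univ_unique, Finset.sum_singleton,
        zero_mul, mul_zero, Finset.sum_const_zero, add_zero, zero_add]
      rw [div_mul_div_comm, hmm2, hP2e i i']
    have eZ : Z.transpose (Sum.inr i) (Sum.inr i')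
        = (if i' = i then 1 else 0) - Δ ^ 2 / (k * (ρbar + ρ * Δ ^ 2)) := by
      rw [hZ]; rfl
    rw [e4, eZ]
    by_cases h : i = i'
    · subst h
      simp only [eq_self_iff_true, if_true]
      apply mul_pos
      · have hinv : (ρ * (k:ℝ))⁻¹ ≤ 1 := inv_le_one_of_one_le₀ hbR
        have ht2 : 0 < ρbar / ρ / (s1 * s2) :=
          div_pos (by positivity) (mul_pos hs1p hs2p)
        linarith
      · linarith
    · rw [if_neg h, if_neg fun e => h e.symm]
      apply mul_pos_of_neg_of_neg
      · have hlt : ρbar / ρ / (s1 * s2) < (ρ * k)⁻¹ := by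
          rw [div_lt_iff₀ (mul_pos hs1p hs2p), inv_mul_eq_div,
            lt_div_iff₀ (by positivity : (0:ℝ) < ρ * k)]
          calc ρbar / ρ * (ρ * k) = ρbar * k := by field_simp
            _ < s1 * s2 := key2
        linarith
      · have := div_pos (by positivity : (0:ℝ) < Δ ^ 2) hc2
        linarith
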